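/- For every natural number K ≥ 1, every u ∈ (−1,1) and all ξ, x ∈ ℝ, the K-th u-derivative of the stationary system G_0(θ_0,ψ_0) = 0 gives the identities: (i) u·∂_ξ∂_u^K θ_0 − ∂_u^K ψ_0 + K·∂_ξ∂_u^{K−1} θ_0 = 0, and (ii) u·∂_ξ∂_u^K ψ_0 − ∂_x²∂_u^K θ_0 + Σ_{m=0}^{K−1} binom(K−1,m)·∂_u^m[cos∘θ_0]·∂_u^{K−m} θ_0 + K·∂_ξ∂_u^{K−1} ψ_0 = 0, where all functions are evaluated at (ξ,u,x). -/

import Mathlib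

noncomputable def θK (x : ℝ) : ℝ := 4 * Real.arctan (Real.exp x)

noncomputable def γ (u : ℝ) : ℝ := 1 / Real.sqrt (1 - u ^ 2)

noncomputable def θ₀ (ξ u x : ℝ) : ℝ := θK (γ u * (x - ξ))

noncomputable def ψ₀ (ξ u x : ℝ) : ℝ := -(u * γ u * deriv θK (γ u * (x - ξ)))

open Real Topology Filter Set Function Finset

lemma contDiff_θK : ContDiff ℝ (⊤ : ℕ∞) θK :=
  contDiff_const.mul (Real.contDiff_arctan.comp Real.contDiff_exp)




lemma hasDerivAt_θK (x : ℝ) :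
    HasDerivAt θK (4 * (Real.exp x / (1 + Real.exp x ^ 2))) x := by
  have h := ((Real.hasDerivAt_arctan (Real.exp x)).comp x (Real.hasDerivAt_exp x)).const_mul 4
  exact h.congr_deriv (by ring)

lemma deriv_θK : deriv θK = fun x => 4 * (Real.exp x / (1 + Real.exp x ^ 2)) :=
  funext fun x => (hasDerivAt_θK x).deriv

lemma one_add_sq_pos (t : ℝ) : 0 < 1 + t ^ 2 := by positivity

lemma sin_θK (x : ℝ) : Real.sin (θK x) =
    4 * Real.exp x * (1 - Real.exp x ^ 2) / (1 + Real.exp x ^ 2) ^ 2 := by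
  set t := Real.exp x with ht
  have h4 : θK x = 2 * (2 * Real.arctan t) := by rw [θK]; ring
  have hs : Real.sqrt (1 + t ^ 2) ^ 2 = 1 + t ^ 2 := Real.sq_sqrt (by positivity)
  have hs0 : Real.sqrt (1 + t ^ 2) ≠ 0 := by positivity
  rw [h4]
  simp only [Real.sin_two_mul, Real.cos_two_mul, Real.sin_arctan, Real.cos_arctan]
  have h10 : (1 : ℝ) + t ^ 2 ≠ 0 := (one_add_sq_pos t).ne'
  field_simp
  ring_nf
  have hs4 : Real.sqrt (1 + t ^ 2) ^ 4 = (1 + t ^ 2) ^ 2 := by rw [show (4:ℕ) = 2 * 2 from rfl, pow_mul, hs]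
  rw [hs4, hs]; ring

lemma hasDerivAt_deriv_θK (x : ℝ) :
    HasDerivAt (deriv θK) (Real.sin (θK x)) x := by
  rw [deriv_θK]
  set t := Real.exp x with ht
  have h10 : (1 : ℝ) + t ^ 2 ≠ 0 := (one_add_sq_pos t).ne'
  have h2 : HasDerivAt (fun x => 1 + Real.exp x ^ 2) (2 * t * t) x := by
    simpa using (((Real.hasDerivAt_exp x).pow 2).const_add 1)
  have h := ((Real.hasDerivAt_exp x).div h2 h10).const_mul 4
  refine HasDerivAt.congr_deriv h ?_
  rw [sin_θK]
  field_simp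
  ring

noncomputable def pd1 (F : ℝ → ℝ → ℝ) (u y : ℝ) : ℝ := deriv (fun u' => F u' y) u
noncomputable def pd2 (F : ℝ → ℝ → ℝ) (u y : ℝ) : ℝ := deriv (fun y' => F u y') y
noncomputable def itd (n : ℕ) (F : ℝ → ℝ → ℝ) (u y : ℝ) : ℝ :=
  iteratedDeriv n (fun u' => F u' y) u

section two_var
variable {s : Set ℝ} {F : ℝ → ℝ → ℝ} {u y : ℝ}

lemma memS (hu : u ∈ s) : (u, y) ∈ s ×ˢ (univ : Set ℝ) := ⟨hu, mem_univ _⟩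

lemma contDiffAt_of_S (hs : IsOpen s) (hF : ContDiffOn ℝ (⊤ : ℕ∞) (uncurry F) (s ×ˢ univ))
    (hu : u ∈ s) : ContDiffAt ℝ (⊤ : ℕ∞) (uncurry F) (u, y) :=
  hF.contDiffAt ((hs.prod isOpen_univ).mem_nhds (memS hu))

lemma hasDerivAt_pd1 (hs : IsOpen s) (hF : ContDiffOn ℝ (⊤ : ℕ∞) (uncurry F) (s ×ˢ univ))
    (hu : u ∈ s) :
    HasDerivAt (fun u' => F u' y) (fderiv ℝ (uncurry F) (u, y) (1, 0)) u := by
  have hd : DifferentiableAt ℝ (uncurry F) (u, y) :=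
    (contDiffAt_of_S hs hF hu).differentiableAt (by simp)
  have h2 : HasDerivAt (fun u' => ((u' : ℝ), y)) ((1 : ℝ), (0 : ℝ)) u :=
    (hasDerivAt_id u).prodMk (hasDerivAt_const u y)
  exact hd.hasFDerivAt.comp_hasDerivAt u h2

lemma hasDerivAt_pd2 (hs : IsOpen s) (hF : ContDiffOn ℝ (⊤ : ℕ∞) (uncurry F) (s ×ˢ univ))
    (hu : u ∈ s) :
    HasDerivAt (fun y' => F u y') (fderiv ℝ (uncurry F) (u, y) (0, 1)) y := by
  have hd : DifferentiableAt ℝ (uncurry F) (u, y) :=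
    (contDiffAt_of_S hs hF hu).differentiableAt (by simp)
  have h2 : HasDerivAt (fun y' => ((u : ℝ), y')) ((0 : ℝ), (1 : ℝ)) y :=
    (hasDerivAt_const y u).prodMk (hasDerivAt_id y)
  exact hd.hasFDerivAt.comp_hasDerivAt y h2

lemma pd1_eq (hs : IsOpen s) (hF : ContDiffOn ℝ (⊤ : ℕ∞) (uncurry F) (s ×ˢ univ))
    (hu : u ∈ s) : pd1 F u y = fderiv ℝ (uncurry F) (u, y) (1, 0) :=
  (hasDerivAt_pd1 hs hF hu).deriv

lemma pd2_eq (hs : IsOpen s) (hF : ContDiffOn ℝ (⊤ : ℕ∞) (uncurry F) (s ×ˢ univ))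
    (hu : u ∈ s) : pd2 F u y = fderiv ℝ (uncurry F) (u, y) (0, 1) :=
  (hasDerivAt_pd2 hs hF hu).deriv

lemma hasDerivAt_slice2 (hs : IsOpen s) (hF : ContDiffOn ℝ (⊤ : ℕ∞) (uncurry F) (s ×ˢ univ))
    (hu : u ∈ s) : HasDerivAt (fun y' => F u y') (pd2 F u y) y := by
  rw [pd2_eq hs hF hu]; exact hasDerivAt_pd2 hs hF hu

lemma contDiffOn_fderiv (hs : IsOpen s) (hF : ContDiffOn ℝ (⊤ : ℕ∞) (uncurry F) (s ×ˢ univ)) :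
    ContDiffOn ℝ (⊤ : ℕ∞) (fderiv ℝ (uncurry F)) (s ×ˢ univ) :=
  hF.fderiv_of_isOpen (hs.prod isOpen_univ) (by simp)

lemma contDiffOn_pd1 (hs : IsOpen s) (hF : ContDiffOn ℝ (⊤ : ℕ∞) (uncurry F) (s ×ˢ univ)) :
    ContDiffOn ℝ (⊤ : ℕ∞) (uncurry (pd1 F)) (s ×ˢ univ) := by
  have h : ContDiffOn ℝ (⊤ : ℕ∞) (fun p => fderiv ℝ (uncurry F) p (1, 0)) (s ×ˢ univ) :=
    (contDiffOn_fderiv hs hF).clm_apply contDiffOn_const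
  exact h.congr (fun p hp => pd1_eq hs hF hp.1)

lemma contDiffOn_pd2 (hs : IsOpen s) (hF : ContDiffOn ℝ (⊤ : ℕ∞) (uncurry F) (s ×ˢ univ)) :
    ContDiffOn ℝ (⊤ : ℕ∞) (uncurry (pd2 F)) (s ×ˢ univ) := by
  have h : ContDiffOn ℝ (⊤ : ℕ∞) (fun p => fderiv ℝ (uncurry F) p (0, 1)) (s ×ˢ univ) :=
    (contDiffOn_fderiv hs hF).clm_apply contDiffOn_const
  exact h.congr (fun p hp => pd2_eq hs hF hp.1)

lemma contDiffOn_slice1 (hs : IsOpen s) (hF : ContDiffOn ℝ (⊤ : ℕ∞) (uncurry F) (s ×ˢ univ))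
    (y : ℝ) : ContDiffOn ℝ (⊤ : ℕ∞) (fun u' => F u' y) s := by
  have h := hF.comp (f := fun u' : ℝ => ((u' : ℝ), y))
    ((contDiff_id.prodMk contDiff_const).contDiffOn) (fun u' hu' => memS hu')
  exact h

lemma pd1_pd2_swap (hs : IsOpen s) (hF : ContDiffOn ℝ (⊤ : ℕ∞) (uncurry F) (s ×ˢ univ))
    (hu : u ∈ s) : pd1 (pd2 F) u y = pd2 (pd1 F) u y := by
  set F2 := fderiv ℝ (uncurry F) with hF2
  have hF2s : ContDiffOn ℝ (⊤ : ℕ∞) F2 (s ×ˢ univ) := contDiffOn_fderiv hs hF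
  have hF2d : DifferentiableAt ℝ F2 (u, y) :=
    (hF2s.contDiffAt ((hs.prod isOpen_univ).mem_nhds (memS hu))).differentiableAt (by simp)
  -- pd1 (pd2 F) u y
  have e1 : pd1 (pd2 F) u y = fderiv ℝ F2 (u, y) (1, 0) (0, 1) := by
    have hev : (fun u' => pd2 F u' y) =ᶠ[𝓝 u] fun u' => F2 (u', y) (0, 1) :=
      eventually_of_mem (hs.mem_nhds hu) (fun u' hu' => pd2_eq hs hF hu')
    rw [pd1, hev.deriv_eq]
    have h' : HasDerivAt (fun u' : ℝ => F2 (u', y) (0, 1)) (fderiv ℝ F2 (u, y) (1, 0) (0, 1)) u := by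
      have hc : HasDerivAt (fun u' : ℝ => ((u' : ℝ), y)) ((1:ℝ), (0:ℝ)) u :=
        (hasDerivAt_id u).prodMk (hasDerivAt_const u y)
      clear_value F2
      have h1 := hF2d.hasFDerivAt.comp_hasDerivAt u hc
      have h2 := h1.clm_apply (hasDerivAt_const u ((0:ℝ), (1:ℝ)))
      have h3 : ((F2 ∘ fun u' => (u', y)) u) 0 = 0 := map_zero _
      rw [h3, add_zero] at h2
      exact h2
    exact h'.deriv
  have e2 : pd2 (pd1 F) u y = fderiv ℝ F2 (u, y) (0, 1) (1, 0) := by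
    have hev : (fun y' => pd1 F u y') = fun y' => F2 (u, y') (1, 0) :=
      funext fun y' => pd1_eq hs hF hu
    rw [pd2, hev]
    have h' : HasDerivAt (fun y' : ℝ => F2 (u, y') (1, 0)) (fderiv ℝ F2 (u, y) (0, 1) (1, 0)) y := by
      have hc : HasDerivAt (fun y' : ℝ => ((u : ℝ), y')) ((0:ℝ), (1:ℝ)) y :=
        (hasDerivAt_const y u).prodMk (hasDerivAt_id y)
      clear_value F2
      have h1 := hF2d.hasFDerivAt.comp_hasDerivAt y hc
      have h2 := h1.clm_apply (hasDerivAt_const y ((1:ℝ), (0:ℝ)))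
      have h3 : ((F2 ∘ fun y' => (u, y')) y) 0 = 0 := map_zero _
      rw [h3, add_zero] at h2
      exact h2
    exact h'.deriv
  have hsymm : IsSymmSndFDerivAt ℝ (uncurry F) (u, y) :=
    (contDiffAt_of_S hs hF hu).isSymmSndFDerivAt (by
      rw [minSmoothness_of_isRCLikeNormedField]
      rw [show ((2:WithTop ℕ∞)) = ((2 : ℕ∞) : WithTop ℕ∞) by rfl]
      exact WithTop.coe_le_coe.mpr le_top)
  rw [e1, e2]
  exact hsymm (1, 0) (0, 1)

lemma itd_zero : itd 0 F = F := by
  funext u y; simp [itd]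

lemma itd_succ (n : ℕ) : itd (n + 1) F = pd1 (itd n F) := by
  funext u y; simp [itd, pd1, iteratedDeriv_succ]

lemma contDiffOn_itd (hs : IsOpen s) (hF : ContDiffOn ℝ (⊤ : ℕ∞) (uncurry F) (s ×ˢ univ)) :
    ∀ n, ContDiffOn ℝ (⊤ : ℕ∞) (uncurry (itd n F)) (s ×ˢ univ)
  | 0 => by rw [itd_zero]; exact hF
  | (n + 1) => by rw [itd_succ]; exact contDiffOn_pd1 hs (contDiffOn_itd hs hF n)

lemma pd2_itd_swap (hs : IsOpen s) (hF : ContDiffOn ℝ (⊤ : ℕ∞) (uncurry F) (s ×ˢ univ)) :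
    ∀ n, ∀ u ∈ s, ∀ y, pd2 (itd n F) u y = itd n (pd2 F) u y
  | 0, u, hu, y => by rw [itd_zero, itd_zero]
  | (n + 1), u, hu, y => by
    rw [itd_succ, ← pd1_pd2_swap hs (contDiffOn_itd hs hF n) hu, itd_succ]
    have hev : (fun u' => pd2 (itd n F) u' y) =ᶠ[𝓝 u] fun u' => itd n (pd2 F) u' y :=
      eventually_of_mem (hs.mem_nhds hu) (fun u' hu' => pd2_itd_swap hs hF n u' hu' y)
    rw [pd1, pd1, hev.deriv_eq]

end two_var


lemma pascal_sum (P Q : ℕ → ℝ) (n : ℕ) :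
    ∑ m ∈ range (n + 1), ((n.choose m : ℝ) * P (m + 1) * Q (n - m))
      + ∑ m ∈ range (n + 1), ((n.choose m : ℝ) * P m * Q (n - m + 1))
    = ∑ m ∈ range (n + 2), (((n + 1).choose m : ℝ)) * P m * Q (n + 1 - m) := by
  rw [Finset.sum_range_succ' (fun m => (((n + 1).choose m : ℝ)) * P m * Q (n + 1 - m)) (n + 1)]
  have e1 : ∀ m ∈ range (n + 1), (((n + 1).choose (m + 1) : ℝ)) * P (m + 1) * Q (n + 1 - (m + 1))
      = (n.choose m : ℝ) * P (m + 1) * Q (n - m)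
        + (n.choose (m + 1) : ℝ) * P (m + 1) * Q (n - m) := by
    intro m hm
    rw [Nat.choose_succ_succ, show n + 1 - (m + 1) = n - m from by omega]
    push_cast; ring
  rw [Finset.sum_congr rfl e1, Finset.sum_add_distrib]
  rw [Finset.sum_range_succ (fun m => (n.choose (m + 1) : ℝ) * P (m + 1) * Q (n - m)) n]
  rw [Nat.choose_succ_self]
  rw [Finset.sum_range_succ' (fun m => (n.choose m : ℝ) * P m * Q (n - m + 1)) n]
  have e2 : ∀ m ∈ range n, (n.choose (m + 1) : ℝ) * P (m + 1) * Q (n - (m + 1) + 1)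
      = (n.choose (m + 1) : ℝ) * P (m + 1) * Q (n - m) := by
    intro m hm
    simp only [Finset.mem_range] at hm
    rw [show n - (m + 1) + 1 = n - m from by omega]
  rw [Finset.sum_congr rfl e2]
  simp only [Nat.choose_zero_right, Nat.cast_zero, Nat.cast_one, Nat.sub_zero, Nat.cast_ofNat]
  ring

section one_var
variable {s : Set ℝ} {f g : ℝ → ℝ} {u : ℝ}

lemma contDiffOn_iteratedDeriv (hs : IsOpen s) (hf : ContDiffOn ℝ (⊤ : ℕ∞) f s) :
    ∀ n, ContDiffOn ℝ (⊤ : ℕ∞) (iteratedDeriv n f) s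
  | 0 => by simpa [iteratedDeriv_zero] using hf
  | (n + 1) => by
    rw [iteratedDeriv_succ]
    exact (contDiffOn_iteratedDeriv hs hf n).deriv_of_isOpen hs (by simp)

lemma differentiableAt_iteratedDeriv (hs : IsOpen s) (hf : ContDiffOn ℝ (⊤ : ℕ∞) f s)
    (hu : u ∈ s) (n : ℕ) : DifferentiableAt ℝ (iteratedDeriv n f) u :=
  ((contDiffOn_iteratedDeriv hs hf n).contDiffAt (hs.mem_nhds hu)).differentiableAt
    (by simp)

lemma deriv_iteratedDeriv (n : ℕ) :
    deriv (iteratedDeriv n f) u = iteratedDeriv (n + 1) f u := by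
  rw [iteratedDeriv_succ]

-- Leibniz rule
lemma iteratedDeriv_mul_eq (hs : IsOpen s) (hf : ContDiffOn ℝ (⊤ : ℕ∞) f s)
    (hg : ContDiffOn ℝ (⊤ : ℕ∞) g s) :
    ∀ n, ∀ u ∈ s, iteratedDeriv n (fun x => f x * g x) u =
      ∑ m ∈ Finset.range (n + 1),
        (n.choose m : ℝ) * iteratedDeriv m f u * iteratedDeriv (n - m) g u
  | 0, u, hu => by simp
  | (n + 1), u, hu => by
    have hev : iteratedDeriv n (fun x => f x * g x) =ᶠ[𝓝 u]
        fun u' => ∑ m ∈ Finset.range (n + 1),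
          (n.choose m : ℝ) * iteratedDeriv m f u' * iteratedDeriv (n - m) g u' :=
      eventually_of_mem (hs.mem_nhds hu) (fun u' hu' => iteratedDeriv_mul_eq hs hf hg n u' hu')
    rw [iteratedDeriv_succ, hev.deriv_eq]
    have hterm : ∀ m ∈ Finset.range (n + 1), DifferentiableAt ℝ
        (fun u' => (n.choose m : ℝ) * iteratedDeriv m f u' * iteratedDeriv (n - m) g u') u :=
      fun m _ => (((differentiableAt_iteratedDeriv hs hf hu m).const_mul _).mul
        (differentiableAt_iteratedDeriv hs hg hu (n - m)))
    rw [deriv_fun_sum hterm]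
    have hder : ∀ m ∈ Finset.range (n + 1),
        deriv (fun u' => (n.choose m : ℝ) * iteratedDeriv m f u' * iteratedDeriv (n - m) g u') u
        = (n.choose m : ℝ) * iteratedDeriv (m + 1) f u * iteratedDeriv (n - m) g u
          + (n.choose m : ℝ) * iteratedDeriv m f u * iteratedDeriv (n - m + 1) g u := by
      intro m _
      rw [show (fun u' => (n.choose m : ℝ) * iteratedDeriv m f u' * iteratedDeriv (n - m) g u')
          = fun u' => (n.choose m : ℝ) * (iteratedDeriv m f u' * iteratedDeriv (n - m) g u')
          from funext fun _ => by ring]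
      rw [deriv_const_mul _ ((differentiableAt_iteratedDeriv hs hf hu m).fun_mul
        (differentiableAt_iteratedDeriv hs hg hu (n - m)))]
      rw [deriv_fun_mul (differentiableAt_iteratedDeriv hs hf hu m)
        (differentiableAt_iteratedDeriv hs hg hu (n - m))]
      rw [deriv_iteratedDeriv, deriv_iteratedDeriv]
      ring
    rw [Finset.sum_congr rfl hder, Finset.sum_add_distrib]
    exact pascal_sum (fun i => iteratedDeriv i f u) (fun j => iteratedDeriv j g u) n
end one_var

lemma iteratedDeriv_const' (c : ℝ) : ∀ n, iteratedDeriv (n + 1) (fun _ : ℝ => c) = fun _ => 0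
  | 0 => by funext u; simp [iteratedDeriv_one]
  | (n + 1) => by
    funext u
    rw [iteratedDeriv_succ, iteratedDeriv_const' c n]
    simp

lemma iteratedDeriv_id0 (u : ℝ) : iteratedDeriv 0 (fun x : ℝ => x) u = u := by simp

lemma iteratedDeriv_id1 (u : ℝ) : iteratedDeriv 1 (fun x : ℝ => x) u = 1 := by
  rw [iteratedDeriv_one]; simp

lemma iteratedDeriv_id2 (m : ℕ) (u : ℝ) : iteratedDeriv (m + 2) (fun x : ℝ => x) u = 0 := by
  rw [show m + 2 = (m + 1) + 1 from rfl, iteratedDeriv_succ']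
  have : deriv (fun x : ℝ => x) = fun _ : ℝ => (1 : ℝ) := by funext x; simp
  rw [this, iteratedDeriv_const' 1 m]
section idmul
variable {s : Set ℝ} {g : ℝ → ℝ} {u : ℝ}

lemma iteratedDeriv_id_mul (hs : IsOpen s) (hg : ContDiffOn ℝ (⊤ : ℕ∞) g s) (hu : u ∈ s)
    (K : ℕ) (hK : 1 ≤ K) :
    iteratedDeriv K (fun x => x * g x) u
      = u * iteratedDeriv K g u + K * iteratedDeriv (K - 1) g u := by
  obtain ⟨n, rfl⟩ : ∃ n, K = n + 1 := ⟨K - 1, by omega⟩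
  rw [iteratedDeriv_mul_eq hs (f := fun x => x) contDiffOn_id hg (n + 1) u hu]
  rw [Finset.sum_range_succ' _ (n + 1), Finset.sum_range_succ' _ n]
  have hz : ∀ m ∈ range n,
      (((n + 1).choose (m + 1 + 1) : ℝ)) * iteratedDeriv (m + 1 + 1) (fun x : ℝ => x) u
        * iteratedDeriv (n + 1 - (m + 1 + 1)) g u = 0 := by
    intro m _
    rw [iteratedDeriv_id2 m u]
    ring
  rw [Finset.sum_congr rfl hz, Finset.sum_const, smul_zero, zero_add]
  rw [iteratedDeriv_id1 u]
  simp only [iteratedDeriv_zero, Nat.choose_one_right, Nat.choose_zero_right,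
    Nat.cast_one, Nat.cast_add, Nat.add_sub_cancel, Nat.sub_zero]
  rw [Nat.choose_one_right]
  push_cast
  ring

end idmul
section glue
variable {F : ℝ → ℝ → ℝ} {u : ℝ}

lemma iteratedDeriv_sub' {s : Set ℝ} {f g : ℝ → ℝ} (hs : IsOpen s)
    (hf : ContDiffOn ℝ (⊤ : ℕ∞) f s) (hg : ContDiffOn ℝ (⊤ : ℕ∞) g s) :
    ∀ n, ∀ u ∈ s, iteratedDeriv n (fun x => f x - g x) u
      = iteratedDeriv n f u - iteratedDeriv n g u
  | 0, u, hu => by simp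
  | (n + 1), u, hu => by
    have hev : iteratedDeriv n (fun x => f x - g x) =ᶠ[𝓝 u]
        fun u' => iteratedDeriv n f u' - iteratedDeriv n g u' :=
      eventually_of_mem (hs.mem_nhds hu) (fun u' hu' => iteratedDeriv_sub' hs hf hg n u' hu')
    rw [iteratedDeriv_succ, hev.deriv_eq,
      deriv_fun_sub (differentiableAt_iteratedDeriv hs hf hu n)
        (differentiableAt_iteratedDeriv hs hg hu n),
      deriv_iteratedDeriv, deriv_iteratedDeriv]

lemma hasDerivAt_sub_shift (x ξ' : ℝ) : HasDerivAt (fun x' : ℝ => x' - x) (1 : ℝ) ξ' :=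
  (hasDerivAt_id ξ').sub_const x

lemma hasDerivAt_const_sub_shift (x ξ' : ℝ) : HasDerivAt (fun x' : ℝ => x - x') (-1 : ℝ) ξ' := by
  simpa using ((hasDerivAt_id ξ').const_sub x)

lemma deriv_shift_itd (hF : ContDiffOn ℝ (⊤ : ℕ∞) (uncurry F)
      ((Set.Ioo (-1 : ℝ) 1) ×ˢ (univ : Set ℝ)))
    (hu : u ∈ Set.Ioo (-1 : ℝ) 1) (k : ℕ) (x ξ : ℝ) :
    deriv (fun ξ' => iteratedDeriv k (fun u' => F u' (x - ξ')) u) ξ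
      = -(iteratedDeriv k (fun u' => pd2 F u' (x - ξ)) u) := by
  have hG := contDiffOn_itd isOpen_Ioo hF k
  have hd : HasDerivAt (fun y' => itd k F u y') (pd2 (itd k F) u (x - ξ)) (x - ξ) :=
    hasDerivAt_slice2 isOpen_Ioo hG hu
  have hin : HasDerivAt (fun ξ' : ℝ => x - ξ') (-1 : ℝ) ξ := by
    simpa using ((hasDerivAt_id ξ).const_sub x)
  have hc := hd.comp ξ hin
  have h1 : deriv (fun ξ' => iteratedDeriv k (fun u' => F u' (x - ξ')) u) ξ
      = pd2 (itd k F) u (x - ξ) * -1 := by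
    have := hc.deriv
    simpa [Function.comp_def, itd] using this
  rw [h1, pd2_itd_swap isOpen_Ioo hF k u hu]
  show itd k (pd2 F) u (x - ξ) * -1 = -(itd k (pd2 F) u (x - ξ))
  ring

lemma deriv2_shift_itd (hF : ContDiffOn ℝ (⊤ : ℕ∞) (uncurry F)
      ((Set.Ioo (-1 : ℝ) 1) ×ˢ (univ : Set ℝ)))
    (hu : u ∈ Set.Ioo (-1 : ℝ) 1) (k : ℕ) (ξ x : ℝ) :
    deriv (deriv (fun x' => iteratedDeriv k (fun u' => F u' (x' - ξ)) u)) x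
      = iteratedDeriv k (fun u' => pd2 (pd2 F) u' (x - ξ)) u := by
  have hG := contDiffOn_itd isOpen_Ioo hF k
  have h1 : deriv (fun x' => iteratedDeriv k (fun u' => F u' (x' - ξ)) u)
      = fun x' => iteratedDeriv k (fun u' => pd2 F u' (x' - ξ)) u := by
    funext x'
    have hd : HasDerivAt (fun y' => itd k F u y') (pd2 (itd k F) u (x' - ξ)) (x' - ξ) :=
      hasDerivAt_slice2 isOpen_Ioo hG hu
    have hin : HasDerivAt (fun x'' : ℝ => x'' - ξ) (1 : ℝ) x' := (hasDerivAt_id x').sub_const ξ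
    have hc := hd.comp x' hin
    have h2 : deriv (fun x'' => iteratedDeriv k (fun u' => F u' (x'' - ξ)) u) x'
        = pd2 (itd k F) u (x' - ξ) * 1 := by
      have := hc.deriv
      simpa [Function.comp_def, itd] using this
    rw [h2, mul_one, pd2_itd_swap isOpen_Ioo hF k u hu]
    rfl
  rw [h1]
  have hG2 := contDiffOn_itd isOpen_Ioo (contDiffOn_pd2 isOpen_Ioo hF) k
  have hd : HasDerivAt (fun y' => itd k (pd2 F) u y')
      (pd2 (itd k (pd2 F)) u (x - ξ)) (x - ξ) :=
    hasDerivAt_slice2 isOpen_Ioo hG2 hu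
  have hin : HasDerivAt (fun x' : ℝ => x' - ξ) (1 : ℝ) x := (hasDerivAt_id x).sub_const ξ
  have hc := hd.comp x hin
  have h3 : deriv (fun x' => iteratedDeriv k (fun u' => pd2 F u' (x' - ξ)) u) x
      = pd2 (itd k (pd2 F)) u (x - ξ) * 1 := by
    have := hc.deriv
    simpa [Function.comp_def, itd] using this
  rw [h3, mul_one, pd2_itd_swap isOpen_Ioo (contDiffOn_pd2 isOpen_Ioo hF) k u hu]
  rfl

end glue



noncomputable def Af (u y : ℝ) : ℝ := θK (γ u * y)
noncomputable def Bf (u y : ℝ) : ℝ := -(u * γ u * deriv θK (γ u * y))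

lemma contDiff_dθK : ContDiff ℝ (⊤ : ℕ∞) (deriv θK) := by
  rw [deriv_θK]
  exact contDiff_const.mul (Real.contDiff_exp.div
    (contDiff_const.add (Real.contDiff_exp.pow 2)) (fun x => by positivity))

lemma contDiffOn_γ : ContDiffOn ℝ (⊤ : ℕ∞) γ (Set.Ioo (-1 : ℝ) 1) := by
  intro u hu
  have h : (0 : ℝ) < 1 - u ^ 2 := by nlinarith [hu.1, hu.2]
  have h1 : ContDiffAt ℝ (⊤ : ℕ∞) (fun u' : ℝ => Real.sqrt (1 - u' ^ 2)) u :=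
    (Real.contDiffAt_sqrt h.ne').comp u
      (contDiff_const.sub (contDiff_id.pow 2)).contDiffAt
  have hγ : γ = fun u' : ℝ => (Real.sqrt (1 - u' ^ 2))⁻¹ := funext fun _ => one_div _
  rw [hγ]
  exact (h1.inv (by positivity)).contDiffWithinAt

lemma mul_smooth : ContDiffOn ℝ (⊤ : ℕ∞) (fun p : ℝ × ℝ => γ p.1 * p.2)
    ((Set.Ioo (-1 : ℝ) 1) ×ˢ (univ : Set ℝ)) :=
  (contDiffOn_γ.comp contDiff_fst.contDiffOn (fun _ hp => hp.1)).mul contDiff_snd.contDiffOn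

lemma hAf : ContDiffOn ℝ (⊤ : ℕ∞) (uncurry Af) ((Set.Ioo (-1 : ℝ) 1) ×ˢ (univ : Set ℝ)) :=
  contDiff_θK.comp_contDiffOn mul_smooth

lemma hBf : ContDiffOn ℝ (⊤ : ℕ∞) (uncurry Bf) ((Set.Ioo (-1 : ℝ) 1) ×ˢ (univ : Set ℝ)) := by
  have h1 : ContDiffOn ℝ (⊤ : ℕ∞) (fun p : ℝ × ℝ => p.1 * γ p.1)
      ((Set.Ioo (-1 : ℝ) 1) ×ˢ (univ : Set ℝ)) :=
    contDiff_fst.contDiffOn.mul (contDiffOn_γ.comp contDiff_fst.contDiffOn (fun _ hp => hp.1))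
  exact ((h1.mul (contDiff_dθK.comp_contDiffOn mul_smooth)).neg)

lemma hasDerivAt_Af_y (u y : ℝ) :
    HasDerivAt (fun y' => Af u y') (deriv θK (γ u * y) * γ u) y := by
  have h1 : HasDerivAt (fun y' : ℝ => γ u * y') (γ u) y := by
    simpa using (hasDerivAt_id y).const_mul (γ u)
  exact ((hasDerivAt_θK (γ u * y)).deriv ▸ (contDiff_θK.differentiable
    (by simp) (γ u * y)).hasDerivAt.comp y h1)

lemma pd2_Af (u y : ℝ) : pd2 Af u y = deriv θK (γ u * y) * γ u :=
  (hasDerivAt_Af_y u y).deriv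

lemma pd2_Bf (u y : ℝ) :
    pd2 Bf u y = -(u * γ u * (Real.sin (θK (γ u * y)) * γ u)) := by
  have h1 : HasDerivAt (fun y' : ℝ => γ u * y') (γ u) y := by
    simpa using (hasDerivAt_id y).const_mul (γ u)
  have h2 : HasDerivAt (fun y' => deriv θK (γ u * y'))
      (Real.sin (θK (γ u * y)) * γ u) y :=
    (hasDerivAt_deriv_θK (γ u * y)).comp y h1
  exact ((h2.const_mul (u * γ u)).neg).deriv

lemma pd2_pd2_Af (u y : ℝ) :
    pd2 (pd2 Af) u y = Real.sin (θK (γ u * y)) * γ u * γ u := by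
  have h1 : HasDerivAt (fun y' : ℝ => γ u * y') (γ u) y := by
    simpa using (hasDerivAt_id y).const_mul (γ u)
  have h2 : HasDerivAt (fun y' => deriv θK (γ u * y') * γ u)
      (Real.sin (θK (γ u * y)) * γ u * γ u) y :=
    ((hasDerivAt_deriv_θK (γ u * y)).comp y h1).mul_const (γ u)
  have he : (fun y' => pd2 Af u y') = fun y' => deriv θK (γ u * y') * γ u :=
    funext fun y' => pd2_Af u y'
  rw [pd2, he]
  exact h2.deriv

lemma γ_sq {u : ℝ} (hu : u ∈ Set.Ioo (-1 : ℝ) 1) : γ u * γ u * (1 - u ^ 2) = 1 := by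
  have h : (0 : ℝ) < 1 - u ^ 2 := by nlinarith [hu.1, hu.2]
  have hs := Real.sq_sqrt h.le
  have hs0 : Real.sqrt (1 - u ^ 2) ≠ 0 := by positivity
  rw [γ]
  field_simp
  exact hs.symm

lemma baseA (u y : ℝ) : Bf u y = -(u * pd2 Af u y) := by
  rw [pd2_Af, Bf]; ring

lemma baseB {u : ℝ} (hu : u ∈ Set.Ioo (-1 : ℝ) 1) (y : ℝ) :
    -(u * pd2 Bf u y) - pd2 (pd2 Af) u y + Real.sin (Af u y) = 0 := by
  rw [pd2_Bf, pd2_pd2_Af, Af]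
  linear_combination (-(Real.sin (θK (γ u * y)))) * γ_sq hu

/-- The `K`-th `u`-derivative of the stationary system `G₀(θ₀,ψ₀) = 0`:
(i) `u ∂_ξ ∂_u^K θ₀ − ∂_u^K ψ₀ + K ∂_ξ ∂_u^{K−1} θ₀ = 0`, and
(ii) `u ∂_ξ ∂_u^K ψ₀ − ∂_x² ∂_u^K θ₀
      + Σ_{m=0}^{K−1} C(K−1,m) ∂_u^m[cos ∘ θ₀] ∂_u^{K−m} θ₀
      + K ∂_ξ ∂_u^{K−1} ψ₀ = 0`. -/
theorem u_derivatives_of_stationary_system (K : ℕ) (hK : 1 ≤ K)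
    (u : ℝ) (hu : u ∈ Set.Ioo (-1 : ℝ) 1) :
    ∀ ξ x : ℝ,
      u * deriv (fun ξ' => iteratedDeriv K (fun u' => θ₀ ξ' u' x) u) ξ
          - iteratedDeriv K (fun u' => ψ₀ ξ u' x) u
          + K * deriv (fun ξ' => iteratedDeriv (K - 1) (fun u' => θ₀ ξ' u' x) u) ξ = 0 ∧
      u * deriv (fun ξ' => iteratedDeriv K (fun u' => ψ₀ ξ' u' x) u) ξ
          - deriv (deriv (fun x' => iteratedDeriv K (fun u' => θ₀ ξ u' x') u)) x
          + (∑ m ∈ Finset.range K, ((K - 1).choose m : ℝ)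
              * iteratedDeriv m (fun u' => Real.cos (θ₀ ξ u' x)) u
              * iteratedDeriv (K - m) (fun u' => θ₀ ξ u' x) u)
          + K * deriv (fun ξ' => iteratedDeriv (K - 1) (fun u' => ψ₀ ξ' u' x) u) ξ = 0 := by
  intro ξ x
  have hI : IsOpen (Set.Ioo (-1 : ℝ) 1) := isOpen_Ioo
  obtain ⟨n, rfl⟩ : ∃ n, K = n + 1 := ⟨K - 1, by omega⟩
  have hgA : ContDiffOn ℝ (⊤ : ℕ∞) (fun u' => pd2 Af u' (x - ξ)) (Set.Ioo (-1 : ℝ) 1) :=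
    contDiffOn_slice1 hI (contDiffOn_pd2 hI hAf) (x - ξ)
  have hgB : ContDiffOn ℝ (⊤ : ℕ∞) (fun u' => pd2 Bf u' (x - ξ)) (Set.Ioo (-1 : ℝ) 1) :=
    contDiffOn_slice1 hI (contDiffOn_pd2 hI hBf) (x - ξ)
  have hgYY : ContDiffOn ℝ (⊤ : ℕ∞) (fun u' => pd2 (pd2 Af) u' (x - ξ)) (Set.Ioo (-1 : ℝ) 1) :=
    contDiffOn_slice1 hI (contDiffOn_pd2 hI (contDiffOn_pd2 hI hAf)) (x - ξ)
  have hSin : ContDiffOn ℝ (⊤ : ℕ∞) (fun u' => Real.sin (Af u' (x - ξ)))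
      (Set.Ioo (-1 : ℝ) 1) :=
    Real.contDiff_sin.comp_contDiffOn (contDiffOn_slice1 hI hAf (x - ξ))
  have hCos : ContDiffOn ℝ (⊤ : ℕ∞) (fun u' => Real.cos (Af u' (x - ξ)))
      (Set.Ioo (-1 : ℝ) 1) :=
    Real.contDiff_cos.comp_contDiffOn (contDiffOn_slice1 hI hAf (x - ξ))
  have hgP : ContDiffOn ℝ (⊤ : ℕ∞) (deriv (fun u' => Af u' (x - ξ))) (Set.Ioo (-1 : ℝ) 1) :=
    contDiffOn_slice1 hI (contDiffOn_pd1 hI hAf) (x - ξ)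
  constructor
  · show u * deriv (fun ξ' => iteratedDeriv (n + 1) (fun u' => Af u' (x - ξ')) u) ξ
        - iteratedDeriv (n + 1) (fun u' => Bf u' (x - ξ)) u
        + ((n + 1 : ℕ) : ℝ)
          * deriv (fun ξ' => iteratedDeriv (n + 1 - 1) (fun u' => Af u' (x - ξ')) u) ξ = 0
    rw [deriv_shift_itd hAf hu (n + 1) x ξ, deriv_shift_itd hAf hu (n + 1 - 1) x ξ]
    have hB1 : iteratedDeriv (n + 1) (fun u' => Bf u' (x - ξ)) u
        = -(u * iteratedDeriv (n + 1) (fun u' => pd2 Af u' (x - ξ)) u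
            + ((n + 1 : ℕ) : ℝ) * iteratedDeriv n (fun u' => pd2 Af u' (x - ξ)) u) := by
      rw [show (fun u' => Bf u' (x - ξ)) = fun u' => -(u' * pd2 Af u' (x - ξ)) from
        funext fun u' => baseA u' (x - ξ)]
      rw [iteratedDeriv_fun_neg (n + 1) (fun u' => u' * pd2 Af u' (x - ξ)) u]
      rw [iteratedDeriv_id_mul hI hgA hu (n + 1) (by omega)]
      simp only [Nat.add_sub_cancel]
    rw [hB1]
    simp only [Nat.add_sub_cancel]
    ring
  · show u * deriv (fun ξ' => iteratedDeriv (n + 1) (fun u' => Bf u' (x - ξ')) u) ξ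
        - deriv (deriv (fun x' => iteratedDeriv (n + 1) (fun u' => Af u' (x' - ξ)) u)) x
        + (∑ m ∈ Finset.range (n + 1), (((n + 1) - 1).choose m : ℝ)
            * iteratedDeriv m (fun u' => Real.cos (Af u' (x - ξ))) u
            * iteratedDeriv ((n + 1) - m) (fun u' => Af u' (x - ξ)) u)
        + ((n + 1 : ℕ) : ℝ)
          * deriv (fun ξ' => iteratedDeriv ((n + 1) - 1) (fun u' => Bf u' (x - ξ')) u) ξ = 0
    rw [deriv_shift_itd hBf hu (n + 1) x ξ, deriv_shift_itd hBf hu ((n + 1) - 1) x ξ,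
      deriv2_shift_itd hAf hu (n + 1) ξ x]
    simp only [Nat.add_sub_cancel]
    have hsum : (∑ m ∈ Finset.range (n + 1), ((n).choose m : ℝ)
            * iteratedDeriv m (fun u' => Real.cos (Af u' (x - ξ))) u
            * iteratedDeriv ((n + 1) - m) (fun u' => Af u' (x - ξ)) u)
        = iteratedDeriv (n + 1) (fun u' => Real.sin (Af u' (x - ξ))) u := by
      have e1 : ∀ m ∈ Finset.range (n + 1), (n.choose m : ℝ)
            * iteratedDeriv m (fun u' => Real.cos (Af u' (x - ξ))) u
            * iteratedDeriv ((n + 1) - m) (fun u' => Af u' (x - ξ)) u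
          = (n.choose m : ℝ) * iteratedDeriv m (fun u' => Real.cos (Af u' (x - ξ))) u
            * iteratedDeriv (n - m) (deriv (fun u' => Af u' (x - ξ))) u := by
        intro m hm
        simp only [Finset.mem_range] at hm
        rw [show n + 1 - m = (n - m) + 1 from by omega, iteratedDeriv_succ']
      rw [Finset.sum_congr rfl e1, ← iteratedDeriv_mul_eq hI hCos hgP n u hu]
      have hev : (fun z => Real.cos (Af z (x - ξ)) * deriv (fun u' => Af u' (x - ξ)) z)
          =ᶠ[𝓝 u] deriv (fun u' => Real.sin (Af u' (x - ξ))) := by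
        refine eventually_of_mem (hI.mem_nhds hu) (fun u' hu' => ?_)
        have hdA : DifferentiableAt ℝ (fun z => Af z (x - ξ)) u' :=
          ((contDiffOn_slice1 hI hAf (x - ξ)).contDiffAt (hI.mem_nhds hu')).differentiableAt
            (by simp)
        have hsin := (Real.hasDerivAt_sin (Af u' (x - ξ))).comp u' hdA.hasDerivAt
        have h5 : deriv (fun u'' => Real.sin (Af u'' (x - ξ))) u'
            = Real.cos (Af u' (x - ξ)) * deriv (fun z => Af z (x - ξ)) u' := by
          simpa [Function.comp_def] using hsin.deriv
        show Real.cos (Af u' (x - ξ)) * deriv (fun z => Af z (x - ξ)) u'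
          = deriv (fun u'' => Real.sin (Af u'' (x - ξ))) u'
        exact h5.symm
      rw [Filter.EventuallyEq.iteratedDeriv_eq n hev, ← iteratedDeriv_succ']
    rw [hsum]
    have hid := iteratedDeriv_id_mul hI hgB hu (n + 1) (by omega)
    have hev2 : (fun u' => u' * pd2 Bf u' (x - ξ)) =ᶠ[𝓝 u]
        (fun u' => Real.sin (Af u' (x - ξ)) - pd2 (pd2 Af) u' (x - ξ)) := by
      refine eventually_of_mem (hI.mem_nhds hu) (fun u' hu' => ?_)
      have := baseB hu' (x - ξ)
      show u' * pd2 Bf u' (x - ξ) = Real.sin (Af u' (x - ξ)) - pd2 (pd2 Af) u' (x - ξ)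
      linarith
    have hsplit : iteratedDeriv (n + 1) (fun u' => u' * pd2 Bf u' (x - ξ)) u
        = iteratedDeriv (n + 1) (fun u' => Real.sin (Af u' (x - ξ))) u
          - iteratedDeriv (n + 1) (fun u' => pd2 (pd2 Af) u' (x - ξ)) u := by
      rw [Filter.EventuallyEq.iteratedDeriv_eq (n + 1) hev2]
      exact iteratedDeriv_sub' hI hSin hgYY (n + 1) u hu
    rw [hid] at hsplit
    simp only [Nat.add_sub_cancel] at hsplit
    linarith [hsplit]
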